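/- The limit set of believed premisses is maximal consistent: let Δ∞ ⊆ Σ be the unique set satisfying Δ∞ = Σ \ Out_{A∞}(Δ∞). Then Δ∞ is satisfiable, and for every φ ∈ Σ \ Δ∞ the set Δ∞ ∪ {φ} is unsatisfiable. -/

import Mathlib

/-- Propositional formulas over atoms `α`, built with `¬` and `→`. -/
inductive Fml (α : Type) : Type
  | atom : α → Fml α
  | neg  : Fml α → Fml α
  | imp  : Fml α → Fml α → Fml α

/-- Satisfaction of a formula by an interpretation (a set of atoms). -/
def Fml.sat {α : Type} (M : Set α) : Fml α → Prop
  | .atom a => a ∈ M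
  | .neg φ => ¬ Fml.sat M φ
  | .imp φ ψ => Fml.sat M φ → Fml.sat M ψ

/-- Semantic entailment `S ⊨ φ`. -/
def Entails {α : Type} (S : Set (Fml α)) (φ : Fml α) : Prop :=
  ∀ M : Set α, (∀ ψ ∈ S, Fml.sat M ψ) → Fml.sat M φ

/-- Satisfiability of a set of formulas. -/
def Satisfiable {α : Type} (S : Set (Fml α)) : Prop :=
  ∃ M : Set α, ∀ ψ ∈ S, Fml.sat M ψ

/-- Propositional tautology. -/
def Tautology {α : Type} (φ : Fml α) : Prop :=
  ∀ M : Set α, Fml.sat M φ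

/-- `prec` is a reliability relation on `Sg`: a strict partial order
(irreflexive, asymmetric, transitive) relating only members of `Sg`. -/
def IsReliability {β : Type} (Sg : Set β) (prec : β → β → Prop) : Prop :=
  (∀ a b, prec a b → a ∈ Sg ∧ b ∈ Sg) ∧
  (∀ a, ¬ prec a a) ∧
  (∀ a b, prec a b → ¬ prec b a) ∧
  (∀ a b c, prec a b → prec b c → prec a c)

/-- `lt` is a strict linear order on `Sg` extending `prec`. -/
def IsLinearExt {β : Type} (Sg : Set β) (prec lt : β → β → Prop) : Prop :=
  (∀ a b, lt a b → a ∈ Sg ∧ b ∈ Sg) ∧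
  (∀ a, ¬ lt a a) ∧
  (∀ a b c, lt a b → lt b c → lt a c) ∧
  (∀ a ∈ Sg, ∀ b ∈ Sg, a ≠ b → lt a b ∨ lt b a) ∧
  (∀ a b, prec a b → lt a b)

/-- Arguments: supporting arguments `P ⇒ φ` and undermining arguments `P ⇏ φ`. -/
inductive Arg (α : Type) : Type
  | sup : Set (Fml α) → Fml α → Arg α
  | und : Set (Fml α) → Fml α → Arg α

/-- The set `A∞` of derivable arguments, as an inductive predicate:
initial arguments, the axiom rule, modus ponens and the contradiction rule. -/
inductive Derivable {α : Type} (Sg : Set (Fml α)) (lt : Fml α → Fml α → Prop) :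
    Arg α → Prop
  | initial {φ} (h : φ ∈ Sg) : Derivable Sg lt (.sup {φ} φ)
  | ax {φ} (h : Tautology φ) : Derivable Sg lt (.sup ∅ φ)
  | mp {P Q φ ψ} (h1 : Derivable Sg lt (.sup P φ))
      (h2 : Derivable Sg lt (.sup Q (.imp φ ψ))) :
      Derivable Sg lt (.sup (P ∪ Q) ψ)
  | contra {P Q φ η} (h1 : Derivable Sg lt (.sup P φ))
      (h2 : Derivable Sg lt (.sup Q (.neg φ)))
      (hmem : η ∈ P ∪ Q) (hmin : ∀ x ∈ P ∪ Q, x ≠ η → lt η x) :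
      Derivable Sg lt (.und ((P ∪ Q) \ {η}) η)

/-- The set `A∞` of derivable arguments. -/
def Ainf {α : Type} (Sg : Set (Fml α)) (lt : Fml α → Fml α → Prop) : Set (Arg α) :=
  {a | Derivable Sg lt a}

/-- `Out_A(S)`: premisses ruled out by undermining arguments in `A`
whose antecedents lie in `S`. -/
def OutA {α : Type} (A : Set (Arg α)) (S : Set (Fml α)) : Set (Fml α) :=
  {φ | ∃ P, Arg.und P φ ∈ A ∧ P ⊆ S}

open scoped Classical in
/-- The most reliable consistent set of premisses built from an enumeration. -/
noncomputable def mrcBuild {α : Type} (l : List (Fml α)) : Set (Fml α) :=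
  l.foldl (fun D σ => if Satisfiable (insert σ D) then insert σ D else D) ∅

/-- `l` enumerates `Sg` so that more reliable premisses come first:
whenever `l[j] ≺ l[k]` one has `k < j`. -/
def IsEnum {β : Type} (Sg : Set β) (prec : β → β → Prop) (l : List β) : Prop :=
  l.Nodup ∧ (∀ x, x ∈ l ↔ x ∈ Sg) ∧
  ∀ (j k : Fin l.length), prec (l.get j) (l.get k) → (k : ℕ) < (j : ℕ)

/-- `D` is a most reliable consistent set of premisses of `⟨Sg, prec⟩`. -/
def MRC {α : Type} (Sg : Set (Fml α)) (prec : Fml α → Fml α → Prop)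
    (D : Set (Fml α)) : Prop :=
  ∃ l : List (Fml α), IsEnum Sg prec l ∧ D = mrcBuild l

/-- `Prem(M)`: the premisses of `Sg` satisfied by interpretation `M`. -/
def PremOf {α : Type} (Sg : Set (Fml α)) (M : Set α) : Set (Fml α) :=
  {φ | φ ∈ Sg ∧ Fml.sat M φ}

/-- The preference relation `M ⊏ N` on interpretations. -/
def Pref {α : Type} (Sg : Set (Fml α)) (prec : Fml α → Fml α → Prop)
    (M N : Set α) : Prop :=
  PremOf Sg M ≠ PremOf Sg N ∧
  ∀ φ ∈ PremOf Sg M \ PremOf Sg N, ∃ ψ ∈ PremOf Sg N \ PremOf Sg M, prec φ ψ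

/-- `Th(⟨Sg, prec⟩)`: formulas entailed by every most reliable consistent set. -/
def ThR {α : Type} (Sg : Set (Fml α)) (prec : Fml α → Fml α → Prop) : Set (Fml α) :=
  {φ | ∀ D, MRC Sg prec D → Entails D φ}

/-- The reliability relation of the `a`-revised theory:
`prec` restricted to `Sg \ {a}`, with `a` strictly more reliable than
every other premiss. -/
def RevPrec {α : Type} (Sg : Set (Fml α)) (prec : Fml α → Fml α → Prop) (a : Fml α) :
    Fml α → Fml α → Prop :=
  fun x y => (prec x y ∧ x ∈ Sg \ {a} ∧ y ∈ Sg \ {a}) ∨ (x ∈ Sg \ {a} ∧ y = a)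

/-- Interpretation of an argument as a semantic claim. -/
def ArgGood {α : Type} : Arg α → Prop
  | .sup P φ => Entails P φ
  | .und P φ => ¬ Satisfiable (P ∪ {φ})

/-- Soundness of the argument system. -/
lemma derivable_sound {α : Type} {Sg : Set (Fml α)} {lt : Fml α → Fml α → Prop}
    {a : Arg α} (h : Derivable Sg lt a) : ArgGood a := by
  induction h with
  | initial h =>
    intro M hM
    exact hM _ rfl
  | ax h =>
    intro M _
    exact h M
  | mp h1 h2 ih1 ih2 =>
    intro M hM
    have hφ := ih1 M (fun ψ hψ => hM ψ (Or.inl hψ))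
    have hi := ih2 M (fun ψ hψ => hM ψ (Or.inr hψ))
    exact hi hφ
  | @contra P Q φ η h1 h2 hmem hmin ih1 ih2 =>
    rintro ⟨M, hM⟩
    have hall : ∀ ψ ∈ P ∪ Q, Fml.sat M ψ := by
      intro ψ hψ
      by_cases hψη : ψ = η
      · exact hψη ▸ hM η (Or.inr rfl)
      · exact hM ψ (Or.inl ⟨hψ, hψη⟩)
    have hφ := ih1 M (fun ψ hψ => hall ψ (Or.inl hψ))
    have hnφ := ih2 M (fun ψ hψ => hall ψ (Or.inr hψ))
    exact hnφ hφ

/-- Completeness: anything entailed by a finite list of premisses is derivable. -/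
lemma derivable_complete {α : Type} (Sg : Set (Fml α)) (lt : Fml α → Fml α → Prop)
    (L : List (Fml α)) (hL : ∀ x ∈ L, x ∈ Sg) (φ : Fml α)
    (h : Entails {x | x ∈ L} φ) :
    ∃ P, P ⊆ {x | x ∈ L} ∧ Derivable Sg lt (.sup P φ) := by
  induction L generalizing φ with
  | nil =>
    refine ⟨∅, by simp, Derivable.ax ?_⟩
    intro M
    exact h M (by simp)
  | cons a t ih =>
    have ht : ∀ x ∈ t, x ∈ Sg := fun x hx => hL x (List.mem_cons_of_mem a hx)
    have h1 : Entails {x | x ∈ t} (Fml.imp a φ) := by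
      intro M hM ha
      refine h M ?_
      intro ψ hψ
      rcases List.mem_cons.mp hψ with h' | h'
      · exact h' ▸ ha
      · exact hM ψ h'
    obtain ⟨Q, hQsub, hQ⟩ := ih ht (Fml.imp a φ) h1
    refine ⟨{a} ∪ Q, ?_, Derivable.mp (Derivable.initial (hL a (List.mem_cons_self))) hQ⟩
    rintro x (hx | hx)
    · simp only [Set.mem_singleton_iff] at hx
      exact hx ▸ (List.mem_cons_self : a ∈ a :: t)
    · exact List.mem_cons_of_mem a (hQsub hx)

/-- A finite nonempty subset of a strictly linearly ordered set has a least element. -/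
lemma exists_lt_min {α : Type} {Sg : Set (Fml α)} {prec lt : Fml α → Fml α → Prop}
    (hlt : IsLinearExt Sg prec lt) (L : List (Fml α)) (hne : L ≠ [])
    (hsub : ∀ x ∈ L, x ∈ Sg) :
    ∃ η ∈ L, ∀ x ∈ L, x ≠ η → lt η x := by
  obtain ⟨_, hirr, htrans, htri, _⟩ := hlt
  induction L with
  | nil => exact absurd rfl hne
  | cons a t ih =>
    rcases eq_or_ne t [] with rfl | hte
    · refine ⟨a, List.mem_cons_self, ?_⟩
      intro x hx hxa
      simp only [List.mem_singleton] at hx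
      exact absurd hx hxa
    · obtain ⟨η, hηt, hηmin⟩ := ih hte (fun x hx => hsub x (List.mem_cons_of_mem a hx))
      rcases eq_or_ne a η with rfl | haη
      · refine ⟨a, List.mem_cons_self, ?_⟩
        intro x hx hxa
        rcases List.mem_cons.mp hx with h' | h'
        · exact absurd h' hxa
        · exact hηmin x h' hxa
      · rcases htri a (hsub a (List.mem_cons_self)) η
          (hsub η (List.mem_cons_of_mem a hηt)) haη with hc | hc
        · refine ⟨a, List.mem_cons_self, ?_⟩
          intro x hx hxa
          rcases List.mem_cons.mp hx with h' | h'
          · exact absurd h' hxa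
          · rcases eq_or_ne x η with rfl | hxη
            · exact hc
            · exact htrans a η x hc (hηmin x h' hxη)
        · refine ⟨η, List.mem_cons_of_mem a hηt, ?_⟩
          intro x hx hxη
          rcases List.mem_cons.mp hx with h' | h'
          · exact h' ▸ hc
          · exact hηmin x h' hxη

/-- The limit set of believed premisses is maximal consistent:
if `Δ∞ = Σ \ Out_{A∞}(Δ∞)`, then `Δ∞` is satisfiable and adding any premiss
of `Σ` outside `Δ∞` makes it unsatisfiable. -/
theorem limit_premisses_maximal_consistent {α : Type} (Sg : Set (Fml α))
    (hfin : Sg.Finite) (prec lt : Fml α → Fml α → Prop)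
    (hprec : IsReliability Sg prec) (hlt : IsLinearExt Sg prec lt)
    (Δ : Set (Fml α)) (hΔ : Δ = Sg \ OutA (Ainf Sg lt) Δ) :
    Satisfiable Δ ∧ ∀ φ ∈ Sg \ Δ, ¬ Satisfiable (Δ ∪ {φ}) := by
  have hΔSg : Δ ⊆ Sg := by rw [hΔ]; exact Set.diff_subset
  have hΔfin : Δ.Finite := hfin.subset hΔSg
  constructor
  · -- Satisfiability of Δ
    by_contra hunsat
    -- Δ is nonempty (the empty set is satisfiable)
    have hne : Δ.Nonempty := by
      rcases Set.eq_empty_or_nonempty Δ with rfl | h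
      · exact absurd ⟨∅, by simp⟩ hunsat
      · exact h
    obtain ⟨σ, hσ⟩ := hne
    -- list enumerating Δ
    set L := hΔfin.toFinset.toList with hLdef
    have hLmem : ∀ x, x ∈ L ↔ x ∈ Δ := by
      intro x
      rw [hLdef, Finset.mem_toList, Set.Finite.mem_toFinset]
    have hLset : {x | x ∈ L} = Δ := by ext x; exact hLmem x
    -- Δ entails ¬σ vacuously
    have hent : Entails {x | x ∈ L} (Fml.neg σ) := by
      rw [hLset]
      intro M hM
      exact absurd ⟨M, hM⟩ hunsat
    obtain ⟨Q, hQsub, hQ⟩ := derivable_complete Sg lt L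
      (fun x hx => hΔSg ((hLmem x).mp hx)) (Fml.neg σ) hent
    rw [hLset] at hQsub
    have hP : Derivable Sg lt (Arg.sup {σ} σ) := Derivable.initial (hΔSg hσ)
    have hPQΔ : {σ} ∪ Q ⊆ Δ := by
      rintro x (hx | hx)
      · simp only [Set.mem_singleton_iff] at hx; exact hx ▸ hσ
      · exact hQsub hx
    -- minimum of {σ} ∪ Q
    have hPQfin : ({σ} ∪ Q : Set (Fml α)).Finite := hΔfin.subset hPQΔ
    set L2 := hPQfin.toFinset.toList with hL2def
    have hL2mem : ∀ x, x ∈ L2 ↔ x ∈ ({σ} ∪ Q : Set (Fml α)) := by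
      intro x
      rw [hL2def, Finset.mem_toList, Set.Finite.mem_toFinset]
    have hL2ne : L2 ≠ [] := by
      intro h
      have := (hL2mem σ).mpr (Or.inl rfl)
      rw [h] at this
      exact List.not_mem_nil this
    obtain ⟨η, hηL2, hηmin⟩ := exists_lt_min hlt L2 hL2ne
      (fun x hx => hΔSg (hPQΔ ((hL2mem x).mp hx)))
    have hηmem : η ∈ ({σ} ∪ Q : Set (Fml α)) := (hL2mem η).mp hηL2
    have hund : Derivable Sg lt (Arg.und (({σ} ∪ Q) \ {η}) η) :=
      Derivable.contra hP hQ hηmem (fun x hx hxη => hηmin x ((hL2mem x).mpr hx) hxη)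
    have hηout : η ∈ OutA (Ainf Sg lt) Δ :=
      ⟨({σ} ∪ Q) \ {η}, hund, fun x hx => hPQΔ hx.1⟩
    have hηΔ : η ∈ Δ := hPQΔ hηmem
    rw [hΔ] at hηΔ
    exact hηΔ.2 hηout
  · -- Maximality
    intro φ hφ
    have hφout : φ ∈ OutA (Ainf Sg lt) Δ := by
      by_contra h
      exact hφ.2 (hΔ ▸ ⟨hφ.1, h⟩)
    obtain ⟨P, hPder, hPsub⟩ := hφout
    have hgood := derivable_sound hPder
    intro hsat
    apply hgood
    obtain ⟨M, hM⟩ := hsat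
    refine ⟨M, fun ψ hψ => hM ψ ?_⟩
    rcases hψ with h' | h'
    · exact Or.inl (hPsub h')
    · exact Or.inr h'
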